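/- arXiv:1909.08283 — 2 statements merged into one kernel-verified Lean document; each statement's English description precedes it below -/
import Mathlib

section
/- In the compact setting described in the context, the set Φ_K of roots of 𝔨 with respect to 𝔱_K equals the set of restrictions to 𝔱_K of the roots in Φ₁ ∪ Φ₃; that is, Φ_K = {θ|_{𝔱_K} : θ ∈ Φ₁ ∪ Φ₃}. -/
open scoped TensorProduct

/-- The root space `𝔤_θ ⊆ 𝔤_ℂ = ℂ ⊗[ℝ] L` of an ℝ-linear map `θ : 𝔱 → ℂ`:
`{Z | [H, Z] = θ(H)·Z for all H ∈ 𝔱}`. -/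
def rootSet {L : Type*} [LieRing L] [LieAlgebra ℝ L]
    (t : Submodule ℝ L) (θ : t →ₗ[ℝ] ℂ) : Set (ℂ ⊗[ℝ] L) :=
  {Z | ∀ H : t, ⁅(1 : ℂ) ⊗ₜ[ℝ] (H : L), Z⁆ = θ H • Z}

/-- `θ ∈ Φ`: `θ` is a root, i.e. `θ ≠ 0` and `𝔤_θ ≠ 0`. -/
def IsRoot {L : Type*} [LieRing L] [LieAlgebra ℝ L]
    (t : Submodule ℝ L) (θ : t →ₗ[ℝ] ℂ) : Prop :=
  θ ≠ 0 ∧ ∃ Z ∈ rootSet t θ, Z ≠ 0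

/-- `θ ∈ Φ₁`: `θ` is a root with `𝔤_θ ⊆ 𝔨_ℂ`. -/
def IsRoot1 {L : Type*} [LieRing L] [LieAlgebra ℝ L]
    (t k : Submodule ℝ L) (θ : t →ₗ[ℝ] ℂ) : Prop :=
  IsRoot t θ ∧ rootSet t θ ⊆ (k.baseChange ℂ : Set (ℂ ⊗[ℝ] L))

/-- `θ ∈ Φ₂`: `θ` is a root with `𝔤_θ ⊆ 𝔭_ℂ`. -/
def IsRoot2 {L : Type*} [LieRing L] [LieAlgebra ℝ L]
    (t p : Submodule ℝ L) (θ : t →ₗ[ℝ] ℂ) : Prop :=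
  IsRoot t θ ∧ rootSet t θ ⊆ (p.baseChange ℂ : Set (ℂ ⊗[ℝ] L))

/-- `θ ∈ Φ₃ = Φ \ (Φ₁ ∪ Φ₂)`. -/
def IsRoot3 {L : Type*} [LieRing L] [LieAlgebra ℝ L]
    (t k p : Submodule ℝ L) (θ : t →ₗ[ℝ] ℂ) : Prop :=
  IsRoot t θ ∧ ¬IsRoot1 t k θ ∧ ¬IsRoot2 t p θ

/-- The root space `𝔨_ϱ ⊆ 𝔨_ℂ` of an ℝ-linear map `ϱ : 𝔱_K → ℂ`:
`{Z ∈ 𝔨_ℂ | [H, Z] = ϱ(H)·Z for all H ∈ 𝔱_K}`. -/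
def kRootSet {L : Type*} [LieRing L] [LieAlgebra ℝ L]
    (k tK : Submodule ℝ L) (ϱ : tK →ₗ[ℝ] ℂ) : Set (ℂ ⊗[ℝ] L) :=
  {Z | Z ∈ k.baseChange ℂ ∧ ∀ H : tK, ⁅(1 : ℂ) ⊗ₜ[ℝ] (H : L), Z⁆ = ϱ H • Z}

/-- `ϱ ∈ Φ_K`: `ϱ` is a `K`-root, i.e. `ϱ ≠ 0` and `𝔨_ϱ ≠ 0`. -/
def IsKRoot {L : Type*} [LieRing L] [LieAlgebra ℝ L]
    (k tK : Submodule ℝ L) (ϱ : tK →ₗ[ℝ] ℂ) : Prop :=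
  ϱ ≠ 0 ∧ ∃ Z ∈ kRootSet k tK ϱ, Z ≠ 0

section AuxToolkit

variable {L : Type*} [LieRing L] [LieAlgebra ℝ L]

lemma lieC_zero (x : ℂ ⊗[ℝ] L) : ⁅x, (0 : ℂ ⊗[ℝ] L)⁆ = 0 := lie_zero x
lemma lieC_add (x u v : ℂ ⊗[ℝ] L) : ⁅x, u + v⁆ = ⁅x, u⁆ + ⁅x, v⁆ := lie_add x u v
lemma lieC_smul (c : ℂ) (x u : ℂ ⊗[ℝ] L) : ⁅x, c • u⁆ = c • ⁅x, u⁆ := lie_smul c x u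
lemma zero_lieC (u : ℂ ⊗[ℝ] L) : ⁅(0 : ℂ ⊗[ℝ] L), u⁆ = 0 := zero_lie u
lemma add_lieC (x y u : ℂ ⊗[ℝ] L) : ⁅x + y, u⁆ = ⁅x, u⁆ + ⁅y, u⁆ := add_lie x y u
lemma smul_lieC (c : ℂ) (x u : ℂ ⊗[ℝ] L) : ⁅c • x, u⁆ = c • ⁅x, u⁆ := smul_lie c x u
lemma neg_lieC (x u : ℂ ⊗[ℝ] L) : ⁅-x, u⁆ = -⁅x, u⁆ := neg_lie x u
lemma lieC_lieC (x y u : ℂ ⊗[ℝ] L) : ⁅x, ⁅y, u⁆⁆ - ⁅y, ⁅x, u⁆⁆ = ⁅⁅x, y⁆, u⁆ := by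
  rw [leibniz_lie x y u]; abel

/-- Complexified adjoint action. -/
noncomputable def adC (x : L) : Module.End ℂ (ℂ ⊗[ℝ] L) :=
  Module.End.baseChangeHom ℝ ℂ L (LieAlgebra.ad ℝ L x)

lemma adC_apply (x : L) (Z : ℂ ⊗[ℝ] L) : adC x Z = ⁅(1 : ℂ) ⊗ₜ[ℝ] x, Z⁆ := by
  induction Z using TensorProduct.induction_on with
  | zero => rw [map_zero, lieC_zero]
  | tmul c y =>
      show (LieAlgebra.ad ℝ L x).baseChange ℂ (c ⊗ₜ[ℝ] y) = _
      simp [adC, Module.End.baseChangeHom, LieAlgebra.ExtendScalars.bracket_tmul,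
        LieAlgebra.ad_apply, AlgHom.ofLinearMap_apply, LinearMap.baseChangeHom_apply]
  | add u v hu hv => rw [map_add, hu, hv, lieC_add]

/-- Real part of an element of `ℂ ⊗[ℝ] L`. -/
noncomputable def reT : (ℂ ⊗[ℝ] L) →ₗ[ℝ] L :=
  TensorProduct.lift ((LinearMap.lsmul ℝ L).comp Complex.reLm)

/-- Imaginary part of an element of `ℂ ⊗[ℝ] L`. -/
noncomputable def imT : (ℂ ⊗[ℝ] L) →ₗ[ℝ] L :=
  TensorProduct.lift ((LinearMap.lsmul ℝ L).comp Complex.imLm)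

@[simp] lemma reT_tmul (c : ℂ) (x : L) : reT (c ⊗ₜ[ℝ] x) = c.re • x := rfl
@[simp] lemma imT_tmul (c : ℂ) (x : L) : imT (c ⊗ₜ[ℝ] x) = c.im • x := rfl

lemma reim_decomp (Z : ℂ ⊗[ℝ] L) :
    (1 : ℂ) ⊗ₜ[ℝ] (reT Z) + Complex.I ⊗ₜ[ℝ] (imT Z) = Z := by
  induction Z using TensorProduct.induction_on with
  | zero => simp
  | tmul c x =>
      rw [reT_tmul, imT_tmul, TensorProduct.tmul_smul, TensorProduct.tmul_smul,
        TensorProduct.smul_tmul', TensorProduct.smul_tmul', ← TensorProduct.add_tmul]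
      norm_num [Complex.real_smul]
  | add u v hu hv =>
      rw [map_add, map_add, TensorProduct.tmul_add, TensorProduct.tmul_add]
      rw [show (1:ℂ) ⊗ₜ[ℝ] reT u + (1:ℂ) ⊗ₜ[ℝ] reT v +
        (Complex.I ⊗ₜ[ℝ] imT u + Complex.I ⊗ₜ[ℝ] imT v) =
        ((1:ℂ) ⊗ₜ[ℝ] reT u + Complex.I ⊗ₜ[ℝ] imT u) +
        ((1:ℂ) ⊗ₜ[ℝ] reT v + Complex.I ⊗ₜ[ℝ] imT v) by abel, hu, hv]

lemma reT_smul (c : ℂ) (Z : ℂ ⊗[ℝ] L) :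
    reT (c • Z) = c.re • reT Z - c.im • imT Z := by
  induction Z using TensorProduct.induction_on with
  | zero => simp
  | tmul d x =>
      rw [TensorProduct.smul_tmul', smul_eq_mul, reT_tmul, reT_tmul, imT_tmul,
        Complex.mul_re, sub_smul, smul_smul, smul_smul]
  | add u v hu hv => simp only [smul_add, map_add, hu, hv]; abel

lemma imT_smul (c : ℂ) (Z : ℂ ⊗[ℝ] L) :
    imT (c • Z) = c.re • imT Z + c.im • reT Z := by
  induction Z using TensorProduct.induction_on with
  | zero => simp
  | tmul d x =>
      rw [TensorProduct.smul_tmul', smul_eq_mul, imT_tmul, imT_tmul, reT_tmul,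
        Complex.mul_im, add_smul, smul_smul, smul_smul, add_comm]
  | add u v hu hv => simp only [smul_add, map_add, hu, hv]; abel

lemma reT_mem_of_mem_baseChange {q : Submodule ℝ L} {Z : ℂ ⊗[ℝ] L}
    (hZ : Z ∈ q.baseChange ℂ) : reT Z ∈ q ∧ imT Z ∈ q := by
  rw [Submodule.baseChange_eq_span] at hZ
  induction hZ using Submodule.span_induction with
  | mem x hx =>
      obtain ⟨y, hy, rfl⟩ := hx
      exact ⟨by simpa using hy, by simp⟩
  | zero => simp
  | add u v _ _ hu hv => simp only [map_add]; exact ⟨q.add_mem hu.1 hv.1, q.add_mem hu.2 hv.2⟩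
  | smul c u _ hu =>
      rw [reT_smul, imT_smul]
      exact ⟨q.sub_mem (q.smul_mem _ hu.1) (q.smul_mem _ hu.2),
        q.add_mem (q.smul_mem _ hu.2) (q.smul_mem _ hu.1)⟩

lemma reT_bracket (H : L) (Z : ℂ ⊗[ℝ] L) :
    reT ⁅(1 : ℂ) ⊗ₜ[ℝ] H, Z⁆ = ⁅H, reT Z⁆ ∧ imT ⁅(1 : ℂ) ⊗ₜ[ℝ] H, Z⁆ = ⁅H, imT Z⁆ := by
  induction Z using TensorProduct.induction_on with
  | zero => rw [lieC_zero]; simp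
  | tmul d x =>
      rw [LieAlgebra.ExtendScalars.bracket_tmul, one_mul]
      simp [lie_smul]
  | add u v hu hv =>
      rw [lieC_add]
      constructor
      · rw [map_add, map_add, hu.1, hv.1]; exact (lie_add H _ _).symm
      · rw [map_add, map_add, hu.2, hv.2]; exact (lie_add H _ _).symm

lemma eq_zero_of_mem_baseChange_disjoint {k p : Submodule ℝ L}
    (hdisj : ∀ x : L, x ∈ k → x ∈ p → x = 0) {Z : ℂ ⊗[ℝ] L}
    (hZk : Z ∈ k.baseChange ℂ) (hZp : Z ∈ p.baseChange ℂ) : Z = 0 := by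
  obtain ⟨h1k, h2k⟩ := reT_mem_of_mem_baseChange hZk
  obtain ⟨h1p, h2p⟩ := reT_mem_of_mem_baseChange hZp
  rw [← reim_decomp Z, hdisj _ h1k h1p, hdisj _ h2k h2p]
  simp

lemma sC_bracket (σ : L →ₗ⁅ℝ⁆ L) (x : L) (Z : ℂ ⊗[ℝ] L) :
    ⁅(1 : ℂ) ⊗ₜ[ℝ] (σ x), (σ.toLinearMap.baseChange ℂ) Z⁆ =
      (σ.toLinearMap.baseChange ℂ) ⁅(1 : ℂ) ⊗ₜ[ℝ] x, Z⁆ := by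
  induction Z using TensorProduct.induction_on with
  | zero => rw [map_zero, lieC_zero, lieC_zero, map_zero]
  | tmul d y =>
      rw [LinearMap.baseChange_tmul, LieAlgebra.ExtendScalars.bracket_tmul,
        LieAlgebra.ExtendScalars.bracket_tmul, LinearMap.baseChange_tmul]
      simp [LieHom.map_lie]
  | add u v hu hv => rw [map_add, lieC_add, hu, hv, lieC_add, map_add]

lemma add_sC_mem (σ : L →ₗ⁅ℝ⁆ L) (hσinv : ∀ x, σ (σ x) = x) (k : Submodule ℝ L)
    (hk : ∀ x, x ∈ k ↔ σ x = x) (Z : ℂ ⊗[ℝ] L) :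
    Z + (σ.toLinearMap.baseChange ℂ) Z ∈ k.baseChange ℂ := by
  induction Z using TensorProduct.induction_on with
  | zero => simp
  | tmul c x =>
      rw [LinearMap.baseChange_tmul, ← TensorProduct.tmul_add]
      refine Submodule.tmul_mem_baseChange_of_mem _ ((hk _).mpr ?_)
      simp only [LieHom.coe_toLinearMap]
      rw [map_add, hσinv]
      exact add_comm _ _
  | add u v hu hv =>
      rw [map_add, show u + v + ((σ.toLinearMap.baseChange ℂ) u +
        (σ.toLinearMap.baseChange ℂ) v) = (u + (σ.toLinearMap.baseChange ℂ) u) +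
        (v + (σ.toLinearMap.baseChange ℂ) v) by abel]
      exact Submodule.add_mem _ hu hv

lemma sub_sC_mem (σ : L →ₗ⁅ℝ⁆ L) (hσinv : ∀ x, σ (σ x) = x) (p : Submodule ℝ L)
    (hp : ∀ x, x ∈ p ↔ σ x = -x) (Z : ℂ ⊗[ℝ] L) :
    Z - (σ.toLinearMap.baseChange ℂ) Z ∈ p.baseChange ℂ := by
  induction Z using TensorProduct.induction_on with
  | zero => simp
  | tmul c x =>
      rw [LinearMap.baseChange_tmul, ← TensorProduct.tmul_sub]
      refine Submodule.tmul_mem_baseChange_of_mem _ ((hp _).mpr ?_)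
      simp only [LieHom.coe_toLinearMap]
      rw [map_sub, hσinv]
      abel
  | add u v hu hv =>
      rw [map_add, show u + v - ((σ.toLinearMap.baseChange ℂ) u +
        (σ.toLinearMap.baseChange ℂ) v) = (u - (σ.toLinearMap.baseChange ℂ) u) +
        (v - (σ.toLinearMap.baseChange ℂ) v) by abel]
      exact Submodule.add_mem _ hu hv

variable [Module.Finite ℝ L]

theorem adR_isSemisimple (hkill : ∀ x : L, x ≠ 0 → killingForm ℝ L x x < 0) (x : L) :
    (LieAlgebra.ad ℝ L x : Module.End ℝ L).IsSemisimple := by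
  set B := killingForm ℝ L with hB
  have hsymm : ∀ a b : L, B a b = B b a := LieModule.traceForm_comm ℝ L L
  have hrefl : B.IsRefl := fun a b h => by rw [hsymm]; exact h
  rw [Module.End.isSemisimple_iff]
  intro q hq
  have hnd : (B.restrict q).Nondegenerate := by
    refine ⟨?_, ?_⟩ <;>
    · intro ⟨y, hy⟩ h
      ext
      by_contra hy0
      have := hkill y hy0
      have h2 := h ⟨y, hy⟩
      simp only [LinearMap.BilinForm.restrict_apply, LinearMap.domRestrict_apply] at h2
      simp only [h2, lt_irrefl] at this
  refine ⟨B.orthogonal q, ?_, ?_⟩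
  · intro y hy
    rw [Submodule.mem_comap]
    rw [LinearMap.BilinForm.mem_orthogonal_iff] at hy ⊢
    intro n hn
    have h1 : B ⁅x, n⁆ y = - B n ⁅x, y⁆ := LieModule.traceForm_apply_lie_apply' ℝ L L x n y
    have h2 : B ⁅x, n⁆ y = 0 := hy _ (hq hn)
    have : B n ⁅x, y⁆ = 0 := by rw [h1] at h2; linarith
    simpa [LieAlgebra.ad_apply, LinearMap.BilinForm.IsOrtho] using this
  · exact LinearMap.BilinForm.isCompl_orthogonal_of_restrict_nondegenerate hrefl hnd

theorem adC_isSemisimple (hkill : ∀ x : L, x ≠ 0 → killingForm ℝ L x x < 0) (x : L) :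
    (adC x).IsSemisimple := by
  have h1 := adR_isSemisimple hkill x
  have hP : Squarefree (minpoly ℝ (LieAlgebra.ad ℝ L x : Module.End ℝ L)) :=
    h1.minpoly_squarefree
  have hsq2 : Squarefree ((minpoly ℝ (LieAlgebra.ad ℝ L x : Module.End ℝ L)).map
      (algebraMap ℝ ℂ)) :=
    ((PerfectField.separable_iff_squarefree.mpr hP).map).squarefree
  refine Module.End.isSemisimple_of_squarefree_aeval_eq_zero hsq2 ?_
  rw [Polynomial.aeval_map_algebraMap, adC, Polynomial.aeval_algHom_apply,
    minpoly.aeval, map_zero]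

end AuxToolkit

set_option maxHeartbeats 1000000 in
/-- In the compact setting (`𝔤` a finite-dimensional real Lie algebra with
negative definite Killing form, `σ` an involutive automorphism with fixed subalgebra `𝔨` and
`(−1)`-eigenspace `𝔭`, `𝔱` a `σ`-stable maximal abelian subalgebra with `𝔱_K = 𝔱 ∩ 𝔨` maximal
abelian in `𝔨` and `𝔱₀ = 𝔱 ∩ 𝔭`), the set `Φ_K` of roots of `𝔨` with respect to `𝔱_K` equals
the set of restrictions to `𝔱_K` of the roots in `Φ₁ ∪ Φ₃`. -/
theorem stmt_15 (L : Type*) [LieRing L] [LieAlgebra ℝ L] [Module.Finite ℝ L]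
    (hkill : ∀ x : L, x ≠ 0 → killingForm ℝ L x x < 0)
    (σ : L →ₗ⁅ℝ⁆ L) (hσinv : ∀ x, σ (σ x) = x)
    (k p : Submodule ℝ L)
    (hk : ∀ x, x ∈ k ↔ σ x = x) (hp : ∀ x, x ∈ p ↔ σ x = -x)
    (t : Submodule ℝ L)
    (htab : ∀ x ∈ t, ∀ y ∈ t, ⁅x, y⁆ = 0)
    (htmax : ∀ s : Submodule ℝ L, (∀ x ∈ s, ∀ y ∈ s, ⁅x, y⁆ = 0) → t ≤ s → s = t)
    (hσt : ∀ x ∈ t, σ x ∈ t)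
    (tK t0 : Submodule ℝ L) (htK : tK = t ⊓ k) (ht0 : t0 = t ⊓ p)
    (htKle : tK ≤ t)
    (htKmax : ∀ s : Submodule ℝ L, s ≤ k → (∀ x ∈ s, ∀ y ∈ s, ⁅x, y⁆ = 0) → tK ≤ s → s = tK) :
    {ϱ : tK →ₗ[ℝ] ℂ | IsKRoot k tK ϱ} =
      {ϱ : tK →ₗ[ℝ] ℂ | ∃ θ : t →ₗ[ℝ] ℂ,
        (IsRoot1 t k θ ∨ IsRoot3 t k p θ) ∧ ϱ = θ.comp (Submodule.inclusion htKle)} := by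
  classical
  have hincl : ∀ H : tK, (Submodule.inclusion htKle) H = ⟨(H : L), htKle H.2⟩ :=
    fun H => Subtype.ext rfl
  have htKk : ∀ H : tK, (H : L) ∈ k := by
    rintro ⟨x, hx⟩
    rw [htK] at hx
    exact hx.2
  have htKt : ∀ H : tK, (H : L) ∈ t := fun H => htKle H.2
  have hσfix : ∀ H : tK, σ (H : L) = (H : L) := fun H => (hk _).1 (htKk H)
  have hdisjkp : ∀ x : L, x ∈ k → x ∈ p → x = 0 := by
    intro x hxk hxp
    have h1 := (hk x).1 hxk
    have h2 := (hp x).1 hxp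
    have h3 : x = -x := by conv_lhs => rw [← h1, h2]
    have h4 : (2 : ℝ) • x = 0 := by rw [two_smul]; nth_rewrite 1 [h3]; exact neg_add_cancel x
    rcases smul_eq_zero.mp h4 with h | h
    · norm_num at h
    · exact h
  have hcancel : ∀ (a b : ℂ) (Y : ℂ ⊗[ℝ] L), Y ≠ 0 → a • Y = b • Y → a = b := by
    intro a b Y hY h
    by_contra hab
    have h2 : (a - b) • Y = 0 := by rw [sub_smul, h, sub_self]
    rcases smul_eq_zero.mp h2 with h' | h'
    · exact hab (sub_eq_zero.mp h')
    · exact hY h'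
  have hbr_lie : ∀ x y : L, x ∈ t → y ∈ t → ∀ Z : ℂ ⊗[ℝ] L,
      ⁅(1:ℂ) ⊗ₜ[ℝ] x, ⁅(1:ℂ) ⊗ₜ[ℝ] y, Z⁆⁆ = ⁅(1:ℂ) ⊗ₜ[ℝ] y, ⁅(1:ℂ) ⊗ₜ[ℝ] x, Z⁆⁆ := by
    intro x y hx hy Z
    have h1 := lieC_lieC ((1:ℂ) ⊗ₜ[ℝ] x) ((1:ℂ) ⊗ₜ[ℝ] y) Z
    rw [LieAlgebra.ExtendScalars.bracket_tmul, htab x hx y hy,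
      TensorProduct.tmul_zero, zero_lieC] at h1
    exact sub_eq_zero.mp h1
  ext ϱ
  simp only [Set.mem_setOf_eq]
  constructor
  · -- Φ_K ⊆ restrictions
    rintro ⟨hϱ0, Z, ⟨hZk, hZbr⟩, hZ0⟩
    by_contra hcon
    set W : Submodule ℂ (ℂ ⊗[ℝ] L) :=
      ⨅ H : tK, Module.End.eigenspace (adC (H : L)) (ϱ H) with hWdef
    have mem_W : ∀ Y : ℂ ⊗[ℝ] L,
        Y ∈ W ↔ ∀ H : tK, ⁅(1:ℂ) ⊗ₜ[ℝ] (H:L), Y⁆ = ϱ H • Y := by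
      intro Y
      simp only [hWdef, Submodule.mem_iInf, Module.End.mem_eigenspace_iff, adC_apply]
    have hWinv : ∀ x : t, ∀ Y ∈ W, adC (x:L) Y ∈ W := by
      intro x Y hY
      rw [mem_W] at hY ⊢
      intro H
      rw [adC_apply, hbr_lie (H:L) (x:L) (htKt H) x.2 Y, hY H, lieC_smul]
    set g : t → Module.End ℂ W := fun x => (adC (x:L)).restrict (fun Y hY => hWinv x Y hY)
      with hgdef
    have hgcoe : ∀ (x : t) (z : W), ((g x z : ℂ ⊗[ℝ] L)) = adC (x:L) (z : ℂ ⊗[ℝ] L) :=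
      fun x z => rfl
    have hgcomm : Pairwise fun i j : t => Commute (g i) (g j) := by
      intro i j _
      refine LinearMap.ext fun z => Subtype.ext ?_
      show ((g i) ((g j) z) : ℂ ⊗[ℝ] L) = ((g j) ((g i) z) : ℂ ⊗[ℝ] L)
      rw [hgcoe, hgcoe, hgcoe, hgcoe, adC_apply, adC_apply, adC_apply, adC_apply,
        hbr_lie (i:L) (j:L) i.2 j.2]
    have hgss : ∀ x : t, (g x).IsFinitelySemisimple := by
      intro x
      have h1 : W ∈ (adC (x:L)).invtSubmodule :=
        (Module.End.mem_invtSubmodule _).mpr (fun Y hY => hWinv x Y hY)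
      exact ((adC_isSemisimple hkill (x:L)).restrict h1).isFinitelySemisimple
    have htop : (⨆ χ : t → ℂ, ⨅ x : t, Module.End.eigenspace (g x) (χ x)) = ⊤ := by
      have h1 := Module.End.iSup_iInf_maxGenEigenspace_eq_top_of_iSup_maxGenEigenspace_eq_top_of_commute
        g hgcomm (fun x => Module.End.iSup_maxGenEigenspace_eq_top (g x))
      rw [← h1]
      exact iSup_congr fun χ => iInf_congr fun x =>
        ((hgss x).maxGenEigenspace_eq_eigenspace (χ x)).symm
    have hZW : Z ∈ W := (mem_W Z).mpr hZbr
    have key : ∀ χ : t → ℂ, (⨅ x : t, Module.End.eigenspace (g x) (χ x)) ≤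
        (p.baseChange ℂ).comap W.subtype := by
      intro χ z hz
      rcases eq_or_ne z 0 with rfl | hz0
      · exact Submodule.zero_mem _
      have hZv0 : (z : ℂ ⊗[ℝ] L) ≠ 0 := fun h => hz0 (Subtype.ext h)
      have heig : ∀ x : t, ⁅(1:ℂ) ⊗ₜ[ℝ] (x:L), (z : ℂ ⊗[ℝ] L)⁆ = χ x • (z : ℂ ⊗[ℝ] L) := by
        intro x
        have h1 : z ∈ Module.End.eigenspace (g x) (χ x) := (Submodule.mem_iInf _).mp hz x
        have h2 : g x z = χ x • z := Module.End.mem_eigenspace_iff.mp h1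
        have h3 := congrArg (Subtype.val) h2
        rw [hgcoe, adC_apply] at h3
        exact h3
      by_cases hzp : (z : ℂ ⊗[ℝ] L) ∈ p.baseChange ℂ
      · exact hzp
      exfalso
      have hWz : ∀ H : tK, ⁅(1:ℂ) ⊗ₜ[ℝ] (H:L), (z : ℂ ⊗[ℝ] L)⁆ = ϱ H • (z : ℂ ⊗[ℝ] L) :=
        (mem_W _).mp z.2
      have hχadd : ∀ x y : t, χ (x + y) = χ x + χ y := by
        intro x y
        apply hcancel _ _ _ hZv0
        rw [← heig (x + y)]
        have h4 : ((x + y : t) : L) = (x : L) + (y : L) := rfl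
        rw [h4, TensorProduct.tmul_add, add_lieC, heig x, heig y, add_smul]
      have hχsmul : ∀ (r : ℝ) (x : t), χ (r • x) = (r : ℂ) * χ x := by
        intro r x
        apply hcancel _ _ _ hZv0
        rw [← heig (r • x)]
        have h5 : ((r • x : t) : L) = r • (x : L) := rfl
        rw [h5, TensorProduct.tmul_smul, ← algebraMap_smul ℂ r ((1:ℂ) ⊗ₜ[ℝ] (x:L)),
          smul_lieC, heig x, smul_smul]
        norm_num [Complex.real_smul]
      obtain ⟨θ, hθapp⟩ : ∃ θ : t →ₗ[ℝ] ℂ, ∀ x, θ x = χ x := by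
        refine ⟨{ toFun := χ, map_add' := hχadd, map_smul' := ?_ }, fun x => rfl⟩
        intro r x
        show χ (r • x) = (RingHom.id ℝ) r • χ x
        rw [hχsmul, RingHom.id_apply, Complex.real_smul]
      have hres : θ.comp (Submodule.inclusion htKle) = ϱ := by
        ext H
        rw [LinearMap.comp_apply, hθapp]
        apply hcancel _ _ _ hZv0
        rw [← heig ((Submodule.inclusion htKle) H)]
        exact hWz H
      have hθ0 : θ ≠ 0 := by
        intro h
        apply hϱ0
        rw [← hres, h]
        ext H
        simp
      have hZroot : (z : ℂ ⊗[ℝ] L) ∈ rootSet t θ := by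
        intro x
        rw [hθapp]
        exact heig x
      have hroot : IsRoot t θ := ⟨hθ0, (z : ℂ ⊗[ℝ] L), hZroot, hZv0⟩
      have hn2 : ¬ IsRoot2 t p θ := fun h => hzp (h.2 hZroot)
      by_cases h1 : rootSet t θ ⊆ (k.baseChange ℂ : Set (ℂ ⊗[ℝ] L))
      · exact hcon ⟨θ, Or.inl ⟨hroot, h1⟩, hres.symm⟩
      · exact hcon ⟨θ, Or.inr ⟨hroot, fun hr => h1 hr.2, hn2⟩, hres.symm⟩
    have hfin : (⟨Z, hZW⟩ : W) ∈ (p.baseChange ℂ).comap W.subtype := by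
      have hmem : (⟨Z, hZW⟩ : W) ∈ (⊤ : Submodule ℂ W) := trivial
      rw [← htop] at hmem
      exact (iSup_le key) hmem
    exact hZ0 (eq_zero_of_mem_baseChange_disjoint hdisjkp hZk hfin)
  · -- restrictions ⊆ Φ_K
    rintro ⟨θ, h13, rfl⟩
    have hroot : IsRoot t θ := h13.elim And.left And.left
    obtain ⟨Z, hZroot, hZnp⟩ : ∃ Z ∈ rootSet t θ, Z ∉ p.baseChange ℂ := by
      rcases h13 with ⟨hr, hsub⟩ | ⟨hr, h1, h2⟩
      · obtain ⟨Z, hZr, hZ0⟩ := hr.2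
        exact ⟨Z, hZr, fun hzp => hZ0 (eq_zero_of_mem_baseChange_disjoint hdisjkp (hsub hZr) hzp)⟩
      · have h3 : ¬ (rootSet t θ ⊆ (p.baseChange ℂ : Set (ℂ ⊗[ℝ] L))) := fun hs => h2 ⟨hr, hs⟩
        obtain ⟨Z, hZr, hznp⟩ := Set.not_subset.mp h3
        exact ⟨Z, hZr, hznp⟩
    have hZ0 : Z ≠ 0 := fun h => hZnp (by rw [h]; exact Submodule.zero_mem _)
    set sC : (ℂ ⊗[ℝ] L) →ₗ[ℂ] (ℂ ⊗[ℝ] L) := σ.toLinearMap.baseChange ℂ with hsCdef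
    set Zk : ℂ ⊗[ℝ] L := (2⁻¹ : ℂ) • (Z + sC Z) with hZkdef
    have hZkk : Zk ∈ k.baseChange ℂ := Submodule.smul_mem _ _ (add_sC_mem σ hσinv k hk Z)
    have hbrk : ∀ H : tK, ⁅(1:ℂ) ⊗ₜ[ℝ] (H:L), Zk⁆ = θ ⟨(H:L), htKle H.2⟩ • Zk := by
      intro H
      have h1 : ⁅(1:ℂ) ⊗ₜ[ℝ] (H:L), Z⁆ = θ ⟨(H:L), htKle H.2⟩ • Z := hZroot ⟨(H:L), htKle H.2⟩
      have h2 : ⁅(1:ℂ) ⊗ₜ[ℝ] (H:L), sC Z⁆ = θ ⟨(H:L), htKle H.2⟩ • sC Z := by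
        conv_lhs => rw [← hσfix H]
        rw [hsCdef, sC_bracket σ (H:L) Z, h1, map_smul]
      rw [hZkdef, lieC_smul, lieC_add, h1, h2, ← smul_add, smul_comm]
    have hZk0 : Zk ≠ 0 := by
      intro h
      rw [hZkdef] at h
      have h1 : Z + sC Z = 0 := by
        rcases smul_eq_zero.mp h with h' | h'
        · norm_num at h'
        · exact h'
      have h2 : sC Z = -Z := by
        have := h1
        rw [add_comm] at this
        exact add_eq_zero_iff_eq_neg.mp this
      have h3 : Z = (2⁻¹ : ℂ) • (Z - sC Z) := by
        rw [h2, sub_neg_eq_add, ← two_smul ℂ, smul_smul]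
        norm_num
      exact hZnp (h3 ▸ Submodule.smul_mem _ _ (sub_sC_mem σ hσinv p hp Z))
    have hbr0 : ∀ x : L, x ∈ t → ∀ Wm ∈ Submodule.baseChange ℂ t,
        ⁅(1:ℂ) ⊗ₜ[ℝ] x, Wm⁆ = 0 := by
      intro x hx Wm hWm
      rw [Submodule.baseChange_eq_span] at hWm
      induction hWm using Submodule.span_induction with
      | mem w hw =>
          obtain ⟨y, hy, rfl⟩ := hw
          show ⁅(1:ℂ) ⊗ₜ[ℝ] x, (1:ℂ) ⊗ₜ[ℝ] y⁆ = 0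
          rw [LieAlgebra.ExtendScalars.bracket_tmul, htab x hx y hy, TensorProduct.tmul_zero]
      | zero => exact lieC_zero _
      | add u v _ _ hu hv => rw [lieC_add, hu, hv, add_zero]
      | smul c u _ hu => rw [lieC_smul, hu, smul_zero]
    have htKB : tK.baseChange ℂ ≤ t.baseChange ℂ := by
      rw [Submodule.baseChange_eq_span (A := ℂ) (p := tK)]
      apply Submodule.span_le.mpr
      rintro w ⟨y, hy, rfl⟩
      exact Submodule.tmul_mem_baseChange_of_mem _ (htKle hy)
    have hcent_elt : ∀ x : L, x ∈ k → (∀ H : tK, ⁅(H:L), x⁆ = 0) → x ∈ tK := by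
      intro x hxk hxc
      have habel : ∀ u ∈ tK ⊔ Submodule.span ℝ {x}, ∀ v ∈ tK ⊔ Submodule.span ℝ {x},
          ⁅u, v⁆ = 0 := by
        intro u hu v hv
        rw [Submodule.mem_sup] at hu hv
        obtain ⟨a, ha, b, hb, rfl⟩ := hu
        obtain ⟨a', ha', b', hb', rfl⟩ := hv
        obtain ⟨r, rfl⟩ := Submodule.mem_span_singleton.mp hb
        obtain ⟨r', rfl⟩ := Submodule.mem_span_singleton.mp hb'
        have hax : ⁅a, x⁆ = 0 := hxc ⟨a, ha⟩
        have ha'x : ⁅a', x⁆ = 0 := hxc ⟨a', ha'⟩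
        have hxa' : ⁅x, a'⁆ = 0 := by rw [← lie_skew, ha'x, neg_zero]
        simp [lie_add, add_lie, lie_smul, smul_lie, hax, hxa',
          htab a (htKle ha) a' (htKle ha')]
      have hle : tK ⊔ Submodule.span ℝ {x} ≤ k :=
        sup_le ((le_of_eq htK).trans inf_le_right)
          ((Submodule.span_le).mpr (Set.singleton_subset_iff.mpr hxk))
      have h6 := htKmax _ hle habel le_sup_left
      rw [← h6]
      exact Submodule.mem_sup_right (Submodule.mem_span_singleton_self x)
    have hcentral : ∀ Y : ℂ ⊗[ℝ] L, Y ∈ k.baseChange ℂ →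
        (∀ H : tK, ⁅(1:ℂ) ⊗ₜ[ℝ] (H:L), Y⁆ = 0) → Y ∈ tK.baseChange ℂ := by
      intro Y hYk hYc
      obtain ⟨hXk, hYk'⟩ := reT_mem_of_mem_baseChange hYk
      have hX : reT Y ∈ tK := hcent_elt _ hXk (fun H => by
        rw [← (reT_bracket (H:L) Y).1, hYc H, map_zero])
      have hY : imT Y ∈ tK := hcent_elt _ hYk' (fun H => by
        rw [← (reT_bracket (H:L) Y).2, hYc H, map_zero])
      rw [← reim_decomp Y]
      exact Submodule.add_mem _ (Submodule.tmul_mem_baseChange_of_mem _ hX)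
        (Submodule.tmul_mem_baseChange_of_mem _ hY)
    have hdect : ∀ x, x ∈ t → ∃ a b : L, a ∈ tK ∧ b ∈ t ∧ σ b = -b ∧ x = a + b := by
      intro x hx
      refine ⟨(2⁻¹ : ℝ) • (x + σ x), (2⁻¹ : ℝ) • (x - σ x), ?_, ?_, ?_, ?_⟩
      · rw [htK]
        refine Submodule.mem_inf.mpr ⟨Submodule.smul_mem _ _ (Submodule.add_mem _ hx (hσt x hx)), ?_⟩
        refine (hk _).mpr ?_
        rw [map_smul, map_add, hσinv]
        rw [add_comm]
      · exact Submodule.smul_mem _ _ (Submodule.sub_mem _ hx (hσt x hx))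
      · rw [map_smul, map_sub, hσinv, ← smul_neg]
        congr 1
        abel
      · rw [← smul_add, show x + σ x + (x - σ x) = (2:ℝ) • x by rw [two_smul]; abel,
          smul_smul]
        norm_num
    refine ⟨?_, Zk, ⟨hZkk, fun H => by rw [LinearMap.comp_apply, hincl H]; exact hbrk H⟩, hZk0⟩
    -- ϱ = θ ∘ incl ≠ 0
    intro h0
    have hθK0 : ∀ H : tK, θ ⟨(H:L), htKle H.2⟩ = 0 := by
      intro H
      have h7 := LinearMap.ext_iff.mp h0 H
      rwa [LinearMap.comp_apply, hincl H, LinearMap.zero_apply] at h7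
    have hZkc : ∀ H : tK, ⁅(1:ℂ) ⊗ₜ[ℝ] (H:L), Zk⁆ = 0 := fun H => by
      rw [hbrk H, hθK0 H, zero_smul]
    have hZkt : Zk ∈ t.baseChange ℂ := htKB (hcentral Zk hZkk hZkc)
    have hvanish0 : ∀ x (hx : x ∈ t), σ x = -x → θ ⟨x, hx⟩ = 0 := by
      intro x hx hsx
      have h1 : ⁅(1:ℂ) ⊗ₜ[ℝ] x, Zk⁆ = 0 := hbr0 x hx Zk hZkt
      have h2 : ⁅(1:ℂ) ⊗ₜ[ℝ] x, sC Z⁆ = -(θ ⟨x, hx⟩ • sC Z) := by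
        have h3 := sC_bracket σ x Z
        rw [hsx, TensorProduct.tmul_neg, neg_lieC, hZroot ⟨x, hx⟩, map_smul] at h3
        rw [← hsCdef] at h3
        exact neg_eq_iff_eq_neg.mp h3
      rw [hZkdef, lieC_smul, lieC_add, hZroot ⟨x, hx⟩, h2] at h1
      have h4 : θ ⟨x, hx⟩ • (Z - sC Z) = 0 := by
        rcases smul_eq_zero.mp h1 with h' | h'
        · norm_num at h'
        · rw [smul_sub, sub_eq_add_neg]
          exact h'
      rcases smul_eq_zero.mp h4 with h' | h'
      · exact h'
      · have hZsc : sC Z = Z := ((sub_eq_zero.mp h')).symm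
        have hZZk : Zk = Z := by
          rw [hZkdef, hZsc, ← two_smul ℂ, smul_smul]
          norm_num
        have hZt : Z ∈ t.baseChange ℂ := hZZk ▸ hZkt
        have h5 : ⁅(1:ℂ) ⊗ₜ[ℝ] x, Z⁆ = 0 := hbr0 x hx Z hZt
        rw [hZroot ⟨x, hx⟩] at h5
        rcases smul_eq_zero.mp h5 with h'' | h''
        · exact h''
        · exact absurd h'' hZ0
    apply hroot.1
    ext x
    obtain ⟨a, b, haK, hbt, hσb, hxab⟩ := hdect x.1 x.2
    have hsplit : θ x = θ ⟨a, htKle haK⟩ + θ ⟨b, hbt⟩ := by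
      rw [← map_add]
      congr 1
      exact Subtype.ext hxab
    rw [LinearMap.zero_apply, hsplit, hθK0 ⟨a, haK⟩, hvanish0 b hbt hσb, add_zero]
end

section
/- Let m ≥ 1 be odd. Define μ, δ ∈ ℝ^{2m} by: μ_{2i−1} = (−1)^{i+1}/2 − 1/(2m) and μ_{2i} = m + 1 − i for i = 1, …, m; δ_{2i−1} = 0 and δ_{2i} = 2(m − i) + 1 for i = 1, …, m. Then, with ⟨·,·⟩ the standard inner product on ℝ^{2m}, (1/(8m))·⟨μ, μ + 2δ⟩ + (2m² + m − 1)/16 = (1/12)(m+1)(4m−1) + (1/32)(1 − 1/m²). -/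
lemma pair_sum (f : ℕ → ℝ) (m : ℕ) :
    ∑ j ∈ Finset.Icc 1 (2 * m), f j = ∑ i ∈ Finset.Icc 1 m, (f (2 * i - 1) + f (2 * i)) := by
  induction m with
  | zero => simp
  | succ n ih =>
    have h2 : 2 * (n + 1) = (2 * n + 1) + 1 := by ring
    rw [h2, Finset.sum_Icc_succ_top (by omega), Finset.sum_Icc_succ_top (by omega),
      Finset.sum_Icc_succ_top (by omega : 1 ≤ n + 1), ih]
    have e1 : 2 * (n + 1) - 1 = 2 * n + 1 := by omega
    have e2 : 2 * (n + 1) = 2 * n + 1 + 1 := by omega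
    rw [e1, e2]
    ring

lemma sum_id (m : ℕ) : ∑ i ∈ Finset.Icc 1 m, (i : ℝ) = m * (m + 1) / 2 := by
  induction m with
  | zero => simp
  | succ n ih => rw [Finset.sum_Icc_succ_top (by omega), ih]; push_cast; ring

lemma sum_sq (m : ℕ) : ∑ i ∈ Finset.Icc 1 m, (i : ℝ) ^ 2 = m * (m + 1) * (2 * m + 1) / 6 := by
  induction m with
  | zero => simp
  | succ n ih => rw [Finset.sum_Icc_succ_top (by omega), ih]; push_cast; ring

lemma sum_alt' (m : ℕ) :
    ∑ i ∈ Finset.Icc 1 m, (-1 : ℝ) ^ (i + 1) = if Odd m then 1 else 0 := by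
  induction m with
  | zero => simp
  | succ n ih =>
    rw [Finset.sum_Icc_succ_top (by omega), ih]
    rcases Nat.even_or_odd n with he | ho
    · have hodd : Odd (n + 1) := Even.add_one he
      rw [if_neg (by simp [Nat.not_odd_iff_even, he]), if_pos hodd,
        Even.neg_one_pow hodd.add_one]
      ring
    · have hev : Even (n + 1) := Odd.add_one ho
      rw [if_pos ho, if_neg (by simp [Nat.not_odd_iff_even, hev]),
        Odd.neg_one_pow hev.add_one]
      ring

/-- Let `m ≥ 1` be odd and define `μ, δ ∈ ℝ^{2m}` (coordinates indexed
`1, …, 2m`) by `μ_{2i−1} = (−1)^{i+1}/2 − 1/(2m)`, `μ_{2i} = m + 1 − i`, `δ_{2i−1} = 0`,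
`δ_{2i} = 2(m − i) + 1` for `i = 1, …, m`. Then, with `⟨·,·⟩` the standard inner product,
`(1/(8m))·⟨μ, μ + 2δ⟩ + (2m² + m − 1)/16 = (1/12)(m+1)(4m−1) + (1/32)(1 − 1/m²)`. -/
theorem stmt_17 (m : ℕ) (hm : 1 ≤ m) (hmodd : Odd m)
    (μ δ : ℕ → ℝ)
    (hμo : ∀ i, 1 ≤ i → i ≤ m → μ (2 * i - 1) = (-1 : ℝ) ^ (i + 1) / 2 - 1 / (2 * (m : ℝ)))
    (hμe : ∀ i, 1 ≤ i → i ≤ m → μ (2 * i) = (m : ℝ) + 1 - (i : ℝ))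
    (hδo : ∀ i, 1 ≤ i → i ≤ m → δ (2 * i - 1) = 0)
    (hδe : ∀ i, 1 ≤ i → i ≤ m → δ (2 * i) = 2 * ((m : ℝ) - (i : ℝ)) + 1) :
    (1 / (8 * (m : ℝ))) * (∑ j ∈ Finset.Icc 1 (2 * m), μ j * (μ j + 2 * δ j)) +
        (2 * (m : ℝ) ^ 2 + (m : ℝ) - 1) / 16 =
      (1 / 12) * ((m : ℝ) + 1) * (4 * (m : ℝ) - 1) +
        (1 / 32) * (1 - 1 / (m : ℝ) ^ 2) := by
  have hM : (m : ℝ) ≠ 0 := Nat.cast_ne_zero.mpr (by omega)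
  set M : ℝ := (m : ℝ) with hMdef
  have key : ∀ i ∈ Finset.Icc 1 m,
      μ (2 * i - 1) * (μ (2 * i - 1) + 2 * δ (2 * i - 1)) +
        μ (2 * i) * (μ (2 * i) + 2 * δ (2 * i)) =
      (-(1 / (2 * M))) * (-1 : ℝ) ^ (i + 1) +
        ((1 / 4 + 1 / (4 * M ^ 2) + (M + 1) * (5 * M + 3)) +
          (-(10 * M + 8)) * (i : ℝ) + 5 * (i : ℝ) ^ 2) := by
    intro i hi
    simp only [Finset.mem_Icc] at hi
    rw [hμo i hi.1 hi.2, hμe i hi.1 hi.2, hδo i hi.1 hi.2, hδe i hi.1 hi.2]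
    have h2 : (-1 : ℝ) ^ (i * 2) = 1 := by
      rw [mul_comm, pow_mul]; norm_num
    field_simp
    linear_combination (4 * M ^ 2 : ℝ) * h2
  rw [pair_sum, Finset.sum_congr rfl key, Finset.sum_add_distrib, ← Finset.mul_sum,
    sum_alt' m, if_pos hmodd, Finset.sum_add_distrib, Finset.sum_add_distrib,
    Finset.sum_const, ← Finset.mul_sum, ← Finset.mul_sum, sum_id, sum_sq,
    Nat.card_Icc]
  simp only [Nat.add_sub_cancel, nsmul_eq_mul]
  field_simp
  ring
end
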